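/- arXiv:1710.07752 — 5 statements merged into one kernel-verified Lean document; each statement's English description precedes it below -/
import Mathlib

section
/- For any category C, the canonical functor κ_C : C → Ω (sending an object x to the pointed category (C, x) and an arrow φ : x → y to the equivalence class of the pair (Hom_C, φ), where correspondences F : C^op × C → Set with distinguished element are identified up to natural isomorphism preserving the distinguished element) is faithful if and only if the only natural automorphism of the identity functor Id_C is the identity natural transformation. -/
/-!
STATEMENT 0: For any category `C`, the canonical functor `κ_C : C → Ω` is faithful
iff the only natural automorphism of the identity functor `Id_C` is the identity.

Faithfulness of `κ_C` is expressed concretely: two arrows `f g : x ⟶ y` of `C`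
determine the same morphism of Ω (i.e. there is a natural isomorphism
`Φ : Hom_C ≅ Hom_C` carrying `f` to `g` at `(x,y)`) only if `f = g`.
-/

open CategoryTheory Opposite

/-- Evaluating a natural endo-transformation of the hom functor at identities:
`Φ.app (op x, y) f = f ≫ Φ.app (op y, y) (𝟙 y)`. -/
lemma homNat_eq_comp_right {C : Type u} [Category.{v} C]
    (Φ : Functor.hom C ⟶ Functor.hom C) {x y : C} (f : x ⟶ y) :
    Φ.app (op x, y) f = f ≫ Φ.app (op y, y) (𝟙 y) := by
  have h := NatTrans.naturality_apply Φ (show (op y, y) ⟶ (op x, y) from (f.op, 𝟙 y)) (𝟙 y)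
  change Φ.app (op x, y) (f ≫ 𝟙 y ≫ 𝟙 y) = f ≫ (Φ.app (op y, y) (𝟙 y) : y ⟶ y) ≫ 𝟙 y at h
  simp at h
  exact h.trans (congrArg (f ≫ ·) (Category.comp_id _))

lemma homNat_eq_comp_left {C : Type u} [Category.{v} C]
    (Φ : Functor.hom C ⟶ Functor.hom C) {x y : C} (f : x ⟶ y) :
    Φ.app (op x, y) f = Φ.app (op x, x) (𝟙 x) ≫ f := by
  have h := NatTrans.naturality_apply Φ (show (op x, x) ⟶ (op x, y) from (𝟙 (op x), f)) (𝟙 x)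
  change Φ.app (op x, y) (𝟙 x ≫ 𝟙 x ≫ f) = 𝟙 x ≫ Φ.app (op x, x) (𝟙 x) ≫ f at h
  simp at h
  exact h

theorem stmt0 {C : Type u} [Category.{v} C] :
    (∀ (x y : C) (f g : x ⟶ y),
        (∃ Φ : Functor.hom C ≅ Functor.hom C, Φ.hom.app (op x, y) f = g) → f = g)
      ↔ (∀ α : 𝟭 C ≅ 𝟭 C, α = Iso.refl (𝟭 C)) := by
  constructor
  · intro H α
    have key : ∀ x : C, α.hom.app x = 𝟙 x := by
      intro x
      refine (H x x (𝟙 x) (α.hom.app x) ?_).symm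
      refine ⟨NatIso.ofComponents (fun p => Equiv.toIso
        { toFun := fun h => h ≫ α.hom.app p.2
          invFun := fun h => h ≫ α.inv.app p.2
          left_inv := fun h => by
            change p.1.unop ⟶ p.2 at h
            simp
            rfl
          right_inv := fun h => by
            change p.1.unop ⟶ p.2 at h
            simp
            rfl }) (fun {p q} m => ?_), by
          change 𝟙 x ≫ α.hom.app x = α.hom.app x
          simp⟩
      refine ConcreteCategory.hom_ext _ _ fun h => ?_
      change p.1.unop ⟶ p.2 at h
      change (m.1.unop ≫ h ≫ m.2) ≫ α.hom.app q.2 = m.1.unop ≫ (h ≫ α.hom.app p.2) ≫ m.2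
      simp only [Functor.hom_obj, Functor.hom_map, types_comp_apply, Equiv.toIso_hom,
        Equiv.coe_fn_mk, Category.assoc]
      congr 1
      congr 1
      have := α.hom.naturality m.2
      simpa using this
    ext x
    simp [key x]
  · intro H x y f g ⟨Φ, hΦ⟩
    set u : ∀ a : C, a ⟶ a := fun a => Φ.hom.app (op a, a) (𝟙 a) with hu
    set v : ∀ a : C, a ⟶ a := fun a => Φ.inv.app (op a, a) (𝟙 a) with hv
    have huv : ∀ a, u a ≫ v a = 𝟙 a := by
      intro a
      have h1 := types_congr_hom (Φ.hom_inv_id_app (op a, a)) (𝟙 a)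
      change Φ.inv.app (op a, a) (Φ.hom.app (op a, a) (𝟙 a)) = 𝟙 a at h1
      have h2 : Φ.inv.app (op a, a) (u a) = u a ≫ v a := homNat_eq_comp_right Φ.inv (u a)
      rw [← h2]
      exact h1
    have hvu : ∀ a, v a ≫ u a = 𝟙 a := by
      intro a
      have h1 := types_congr_hom (Φ.inv_hom_id_app (op a, a)) (𝟙 a)
      change Φ.hom.app (op a, a) (Φ.inv.app (op a, a) (𝟙 a)) = 𝟙 a at h1
      have h2 : Φ.hom.app (op a, a) (v a) = v a ≫ u a := homNat_eq_comp_right Φ.hom (v a)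
      rw [← h2]
      exact h1
    have hnat : ∀ {a b : C} (k : a ⟶ b), k ≫ u b = u a ≫ k := by
      intro a b k
      rw [← homNat_eq_comp_right Φ.hom k, ← homNat_eq_comp_left Φ.hom k]
    have hnatv : ∀ {a b : C} (k : a ⟶ b), k ≫ v b = v a ≫ k := by
      intro a b k
      rw [← homNat_eq_comp_right Φ.inv k, ← homNat_eq_comp_left Φ.inv k]
    set α : 𝟭 C ≅ 𝟭 C :=
      { hom := { app := u, naturality := fun a b k => by simpa using hnat k }
        inv := { app := v, naturality := fun a b k => by simpa using hnatv k }
        hom_inv_id := by ext a; simpa using huv a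
        inv_hom_id := by ext a; simpa using hvu a } with hα
    have hα' := H α
    have hid : u y = 𝟙 y := by
      have h3 := congr_arg (fun β : 𝟭 C ≅ 𝟭 C => β.hom.app y) hα'
      simpa [hα] using h3
    rw [← hΦ, homNat_eq_comp_right Φ.hom f]
    rw [show Φ.hom.app (op y, y) (𝟙 y) = u y from rfl, hid, Category.comp_id]
end

section
/- For any ring k (with at least two elements, or trivially for the zero ring), the only natural automorphism of the identity functor of the category of commutative k-algebras is the identity natural transformation; i.e., Aut(Id_{k-Alg}) is trivial. -/
/-!
STATEMENT 1: For any commutative ring `k`, the only natural automorphism of the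
identity functor of the category of commutative `k`-algebras is the identity.
The category of commutative `k`-algebras is realized as the under category
`Under (CommRingCat.of k)` of commutative rings under `k`.
-/

open CategoryTheory

open Polynomial

section Aux


variable {k : Type u} [CommRing k]

/-- The polynomial ring `k[X]` as an object of `Under (CommRingCat.of k)`. -/
noncomputable def Pk (k : Type u) [CommRing k] : Under (CommRingCat.of k) :=
  Under.mk (CommRingCat.ofHom (C : k →+* Polynomial k))

/-- Corepresentability: any natural endomorphism of the identity functor is given by
evaluation of the polynomial `(τ.app (Pk k)).right X`. -/
lemma key_eval (τ : 𝟭 (Under (CommRingCat.of k)) ⟶ 𝟭 _) (A : Under (CommRingCat.of k))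
    (a : A.right) :
    (τ.app A).right a = eval₂ A.hom.hom a ((τ.app (Pk k)).right X) := by
  let f : Pk k ⟶ A := Under.homMk (CommRingCat.ofHom (eval₂RingHom A.hom.hom a)) (by ext c; simp [Pk])
  have h := τ.naturality f
  have h2 : f.right ≫ (τ.app A).right = (τ.app (Pk k)).right ≫ f.right := by
    have := congrArg CommaMorphism.right h
    simpa using this
  have h3 : (τ.app A).right (f.right X) = f.right ((τ.app (Pk k)).right X) := by
    exact congrFun (congrArg (fun (g : _ ⟶ _) => (g : Polynomial k → A.right)) h2) X
  have hfX : f.right X = a := eval₂_X _ _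
  have hfq : ∀ p, f.right p = eval₂ A.hom.hom a p := fun _ => rfl
  rw [hfX, hfq] at h3
  exact h3

lemma eval2_special (q : Polynomial k) (n : ℕ) :
    (eval₂ ((C : Polynomial k →+* Polynomial (Polynomial k)).comp C)
      ((X : Polynomial (Polynomial k)) * C X) q).coeff n = C (q.coeff n) * X ^ n := by
  induction q using Polynomial.induction_on' with
  | add p r hp hr => rw [eval₂_add, coeff_add, hp, hr, coeff_add, C_add, add_mul]
  | monomial j a =>
      rw [eval₂_monomial]
      simp only [RingHom.coe_comp, Function.comp_apply, mul_pow, ← C_pow]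
      rw [show (C (C a) : Polynomial (Polynomial k)) * (X ^ j * C (X ^ j))
            = C (C a * X ^ j) * X ^ j by ring_nf; rw [C_mul]; ring]
      rw [coeff_C_mul, coeff_X_pow, coeff_monomial]
      by_cases h : n = j
      · simp [h]
      · simp [h, if_neg (Ne.symm h)]

lemma orth_of_mul (q : Polynomial k)
    (E : eval₂ ((C : Polynomial k →+* Polynomial (Polynomial k)).comp C)
        ((X : Polynomial (Polynomial k)) * C X) q
      = eval₂ ((C : Polynomial k →+* Polynomial (Polynomial k)).comp C) X q
        * eval₂ ((C : Polynomial k →+* Polynomial (Polynomial k)).comp C) (C X) q) :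
    ∀ n m, q.coeff n * q.coeff m = if n = m then q.coeff n else 0 := by
  have h1 : eval₂ ((C : Polynomial k →+* Polynomial (Polynomial k)).comp C) X q
      = q.map C := rfl
  have h2 : eval₂ ((C : Polynomial k →+* Polynomial (Polynomial k)).comp C) (C X) q
      = C q := by
    rw [← hom_eval₂, eval₂_C_X]
  rw [h1, h2] at E
  intro n m
  have e1 := congrArg (fun p => (p.coeff n).coeff m) E
  simp only [eval2_special] at e1
  rw [coeff_C_mul, coeff_X_pow] at e1
  have : (q.map C * C q).coeff n = C (q.coeff n) * q := by
    rw [mul_comm, coeff_C_mul, coeff_map]; ring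
  rw [this, coeff_C_mul] at e1
  rw [← e1]
  by_cases h : m = n
  · simp [h]
  · simp [h, if_neg (Ne.symm h)]

lemma q_eq_X (q r : Polynomial k)
    (horth : ∀ n m, q.coeff n * q.coeff m = if n = m then q.coeff n else 0)
    (hcomp : r.comp q = X) : q = X := by
  have hidem : ∀ n, q.coeff n * q.coeff n = q.coeff n := fun n => by simpa using horth n n
  have c0 : ∀ m, (q ^ (m + 1)).coeff 0 = q.coeff 0 := by
    intro m
    induction m with
    | zero => simp
    | succ m ih => rw [pow_succ, mul_coeff_zero, ih, horth]; simp
  have c1 : ∀ m, m ≠ 1 → (q ^ m).coeff 1 = 0 := by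
    intro m hm
    match m, hm with
    | 0, _ => simp [coeff_one]
    | (n + 2), _ =>
      induction n with
      | zero =>
          rw [pow_two, coeff_mul]
          simp [Finset.Nat.antidiagonal_succ, horth]
      | succ n ih =>
          rw [pow_succ, coeff_mul]
          simp only [Finset.Nat.antidiagonal_succ]
          simp [ih, c0, horth, coeff_mul]
  have hb : r.coeff 1 * q.coeff 1 = 1 := by
    have := congrArg (fun p => p.coeff 1) hcomp
    simp only [coeff_X_one] at this
    rw [comp, eval₂_eq_sum, Polynomial.sum] at this
    rw [finset_sum_coeff] at this
    have hterm : ∀ j ∈ r.support, (C (r.coeff j) * q ^ j).coeff 1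
        = if j = 1 then r.coeff 1 * q.coeff 1 else 0 := by
      intro j _
      rw [coeff_C_mul]
      by_cases h : j = 1
      · simp [h]
      · simp [h, c1 j h]
    rw [Finset.sum_congr rfl hterm, Finset.sum_ite_eq' r.support 1] at this
    by_cases h : 1 ∈ r.support
    · simpa [h] using this
    · rw [if_neg h] at this
      haveI := subsingleton_of_zero_eq_one this
      exact Subsingleton.elim _ _
  have ha1 : q.coeff 1 = 1 := by
    calc q.coeff 1 = q.coeff 1 * (r.coeff 1 * q.coeff 1) := by rw [hb, mul_one]
    _ = r.coeff 1 * (q.coeff 1 * q.coeff 1) := by ring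
    _ = r.coeff 1 * q.coeff 1 := by rw [hidem]
    _ = 1 := hb
  ext n
  by_cases h : n = 1
  · simp [h, ha1]
  · have := horth n 1
    rw [ha1, mul_one, if_neg h] at this
    simp [this, coeff_X, h, Ne.symm h]

end Aux


theorem stmt1 (k : Type u) [CommRing k]
    (α : 𝟭 (Under (CommRingCat.of k)) ≅ 𝟭 (Under (CommRingCat.of k))) :
    α = Iso.refl (𝟭 (Under (CommRingCat.of k))) := by
  set q : Polynomial k := (α.hom.app (Pk k)).right X with hq_def
  set r : Polynomial k := (α.inv.app (Pk k)).right X with hr_def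
  -- multiplicativity at k[X][Y]
  let A2 : Under (CommRingCat.of k) :=
    Under.mk (CommRingCat.ofHom
      ((C : Polynomial k →+* Polynomial (Polynomial k)).comp C))
  have hm : (α.hom.app A2).right ((X : Polynomial (Polynomial k)) * C X)
      = (α.hom.app A2).right (X : Polynomial (Polynomial k))
        * (α.hom.app A2).right (C X : Polynomial (Polynomial k)) :=
    map_mul _ _ _
  have e1 := key_eval α.hom A2 ((X : Polynomial (Polynomial k)) * C X)
  have e2 := key_eval α.hom A2 (X : Polynomial (Polynomial k))
  have e3 := key_eval α.hom A2 (C X : Polynomial (Polynomial k))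
  rw [e1, e2, e3] at hm
  have horth := orth_of_mul q hm
  -- composition identity
  have hcomp : r.comp q = X := by
    have h1 := key_eval α.inv (Pk k) q
    have h2 : α.hom.app (Pk k) ≫ α.inv.app (Pk k) = 𝟙 (Pk k) := by
      rw [← NatTrans.comp_app, α.hom_inv_id]; rfl
    have h3 : (α.inv.app (Pk k)).right q = X := by
      have h4 := congrArg CommaMorphism.right h2
      have h5 := congrFun (congrArg (fun (g : _ ⟶ _) =>
        (g : Polynomial k → Polynomial k)) h4) X
      exact h5
    rw [h3] at h1
    exact h1.symm
  have hqX : q = X := q_eq_X q r horth hcomp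
  -- conclude
  apply Iso.ext
  apply NatTrans.ext
  funext A
  have key : ∀ a : A.right, (α.hom.app A).right a = a := by
    intro a
    rw [key_eval α.hom A a, ← hq_def, hqX, eval₂_X]
  apply CommaMorphism.ext
  · exact Subsingleton.elim _ _
  · ext a
    simpa using key a
end

section
/- For any functor F : C → D, the assignment sending each object c ∈ C to the Ω-morphism [(Hom_D ∘ (F^op × Id_D), id_{F(c)})] : (C, c) → (D, F(c)) defines a natural transformation κ_{tw,F} : κ_C → κ_D ∘ F between the canonical functors C → Ω, and dually the assignment c ↦ [(Hom_D ∘ (Id_D^op × F), id_{F(c)})] defines a natural transformation κ_{cotw,F} : κ_D ∘ F → κ_C. -/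
open CategoryTheory Opposite

universe u

variable {B C D E : Type u} [SmallCategory B] [SmallCategory C] [SmallCategory D]
  [SmallCategory E]

/-- The relation generated by arrows of the middle category, defining the
coend-style composite of two correspondences. -/
def OmegaRel (F : Cᵒᵖ × D ⥤ Type u) (G : Dᵒᵖ × E ⥤ Type u) (c : Cᵒᵖ) (e : E) :
    (Σ d : D, F.obj (c, d) × G.obj (op d, e)) →
      (Σ d : D, F.obj (c, d) × G.obj (op d, e)) → Prop :=
  fun s t => ∃ f : s.1 ⟶ t.1,
    F.map ((𝟙 c, f) : ((c, s.1) : Cᵒᵖ × D) ⟶ (c, t.1)) s.2.1 = t.2.1 ∧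
    G.map ((f.op, 𝟙 e) : ((op t.1, e) : Dᵒᵖ × E) ⟶ (op s.1, e)) t.2.2 = s.2.2

/-- The composite `F *_Ω G` of two correspondences. -/
def omegaComp (F : Cᵒᵖ × D ⥤ Type u) (G : Dᵒᵖ × E ⥤ Type u) :
    Cᵒᵖ × E ⥤ Type u where
  obj p := Quot (OmegaRel F G p.1 p.2)
  map {p q} g := TypeCat.ofHom (
    Quot.map
      (fun s => ⟨s.1, F.map ((g.1, 𝟙 s.1) : ((p.1, s.1) : Cᵒᵖ × D) ⟶ (q.1, s.1)) s.2.1,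
        G.map ((𝟙 (op s.1), g.2) : ((op s.1, p.2) : Dᵒᵖ × E) ⟶ (op s.1, q.2)) s.2.2⟩)
      (by
        rintro ⟨d, a, b⟩ ⟨d', a', b'⟩ ⟨f, h1, h2⟩
        dsimp at *
        refine ⟨f, ?_, ?_⟩
        · have harr :
              CategoryStruct.comp (X := ((p.1, d) : Cᵒᵖ × D))
                (Y := ((q.1, d) : Cᵒᵖ × D)) (Z := ((q.1, d') : Cᵒᵖ × D))
                (g.1, 𝟙 d) (𝟙 q.1, f)
              = CategoryStruct.comp (X := ((p.1, d) : Cᵒᵖ × D))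
                (Y := ((p.1, d') : Cᵒᵖ × D)) (Z := ((q.1, d') : Cᵒᵖ × D))
                (𝟙 p.1, f) (g.1, 𝟙 d') := by
            show ((g.1 ≫ 𝟙 q.1, 𝟙 d ≫ f) : ((p.1, d) : Cᵒᵖ × D) ⟶ (q.1, d'))
              = (𝟙 p.1 ≫ g.1, f ≫ 𝟙 d')
            simp
          rw [← h1, ← FunctorToTypes.map_comp_apply, ← FunctorToTypes.map_comp_apply,
            harr]
        · have harr :
              CategoryStruct.comp (X := ((op d', p.2) : Dᵒᵖ × E))
                (Y := ((op d', q.2) : Dᵒᵖ × E)) (Z := ((op d, q.2) : Dᵒᵖ × E))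
                (𝟙 (op d'), g.2) (f.op, 𝟙 q.2)
              = CategoryStruct.comp (X := ((op d', p.2) : Dᵒᵖ × E))
                (Y := ((op d, p.2) : Dᵒᵖ × E)) (Z := ((op d, q.2) : Dᵒᵖ × E))
                (f.op, 𝟙 p.2) (𝟙 (op d), g.2) := by
            show ((𝟙 (op d') ≫ f.op, g.2 ≫ 𝟙 q.2) : ((op d', p.2) : Dᵒᵖ × E) ⟶ (op d, q.2))
              = (f.op ≫ 𝟙 (op d), 𝟙 p.2 ≫ g.2)
            simp
          rw [← h2, ← FunctorToTypes.map_comp_apply, ← FunctorToTypes.map_comp_apply,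
            harr]))
  map_id p := by
    ext z
    induction z using Quot.ind with
    | _ s =>
      rcases s with ⟨d, a, b⟩
      have ha : F.map (((𝟙 p : p ⟶ p).1, 𝟙 d) :
          ((p.1, d) : Cᵒᵖ × D) ⟶ (p.1, d)) a = a := by
        rw [show ((((𝟙 p : p ⟶ p).1, 𝟙 d)) : ((p.1, d) : Cᵒᵖ × D) ⟶ (p.1, d))
            = 𝟙 ((p.1, d) : Cᵒᵖ × D) from rfl, FunctorToTypes.map_id_apply]
      have hb : G.map ((𝟙 (op d), (𝟙 p : p ⟶ p).2) :
          ((op d, p.2) : Dᵒᵖ × E) ⟶ (op d, p.2)) b = b := by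
        rw [show ((𝟙 (op d), (𝟙 p : p ⟶ p).2) : ((op d, p.2) : Dᵒᵖ × E) ⟶ (op d, p.2))
            = 𝟙 ((op d, p.2) : Dᵒᵖ × E) from rfl, FunctorToTypes.map_id_apply]
      show Quot.mk (OmegaRel F G p.1 p.2)
          ⟨d, F.map (((𝟙 p : p ⟶ p).1, 𝟙 d) : ((p.1, d) : Cᵒᵖ × D) ⟶ (p.1, d)) a,
            G.map ((𝟙 (op d), (𝟙 p : p ⟶ p).2) :
              ((op d, p.2) : Dᵒᵖ × E) ⟶ (op d, p.2)) b⟩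
          = Quot.mk (OmegaRel F G p.1 p.2) ⟨d, a, b⟩
      rw [ha, hb]
  map_comp {p q r} g g' := by
    ext z
    induction z using Quot.ind with
    | _ s =>
      rcases s with ⟨d, a, b⟩
      have harrF :
          CategoryStruct.comp (X := ((p.1, d) : Cᵒᵖ × D))
            (Y := ((q.1, d) : Cᵒᵖ × D)) (Z := ((r.1, d) : Cᵒᵖ × D))
            (g.1, 𝟙 d) (g'.1, 𝟙 d)
          = ((((g ≫ g') : p ⟶ r).1, 𝟙 d) : ((p.1, d) : Cᵒᵖ × D) ⟶ (r.1, d)) := by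
        show ((g.1 ≫ g'.1, 𝟙 d ≫ 𝟙 d) : ((p.1, d) : Cᵒᵖ × D) ⟶ (r.1, d))
          = ((g ≫ g').1, 𝟙 d)
        simp
      have harrG :
          CategoryStruct.comp (X := ((op d, p.2) : Dᵒᵖ × E))
            (Y := ((op d, q.2) : Dᵒᵖ × E)) (Z := ((op d, r.2) : Dᵒᵖ × E))
            (𝟙 (op d), g.2) (𝟙 (op d), g'.2)
          = ((𝟙 (op d), ((g ≫ g') : p ⟶ r).2) :
              ((op d, p.2) : Dᵒᵖ × E) ⟶ (op d, r.2)) := by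
        show ((𝟙 (op d) ≫ 𝟙 (op d), g.2 ≫ g'.2) : ((op d, p.2) : Dᵒᵖ × E) ⟶ (op d, r.2))
          = (𝟙 (op d), (g ≫ g').2)
        simp
      have ha : F.map ((((g ≫ g') : p ⟶ r).1, 𝟙 d) :
            ((p.1, d) : Cᵒᵖ × D) ⟶ (r.1, d)) a
          = F.map ((g'.1, 𝟙 d) : ((q.1, d) : Cᵒᵖ × D) ⟶ (r.1, d))
              (F.map ((g.1, 𝟙 d) : ((p.1, d) : Cᵒᵖ × D) ⟶ (q.1, d)) a) := by
        rw [← harrF, FunctorToTypes.map_comp_apply]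
      have hb : G.map ((𝟙 (op d), ((g ≫ g') : p ⟶ r).2) :
            ((op d, p.2) : Dᵒᵖ × E) ⟶ (op d, r.2)) b
          = G.map ((𝟙 (op d), g'.2) : ((op d, q.2) : Dᵒᵖ × E) ⟶ (op d, r.2))
              (G.map ((𝟙 (op d), g.2) : ((op d, p.2) : Dᵒᵖ × E) ⟶ (op d, q.2)) b) := by
        rw [← harrG, FunctorToTypes.map_comp_apply]
      show Quot.mk (OmegaRel F G r.1 r.2)
          ⟨d, F.map ((((g ≫ g') : p ⟶ r).1, 𝟙 d) : ((p.1, d) : Cᵒᵖ × D) ⟶ (r.1, d)) a,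
            G.map ((𝟙 (op d), ((g ≫ g') : p ⟶ r).2) :
              ((op d, p.2) : Dᵒᵖ × E) ⟶ (op d, r.2)) b⟩
          = Quot.mk (OmegaRel F G r.1 r.2)
          ⟨d, F.map ((g'.1, 𝟙 d) : ((q.1, d) : Cᵒᵖ × D) ⟶ (r.1, d))
                (F.map ((g.1, 𝟙 d) : ((p.1, d) : Cᵒᵖ × D) ⟶ (q.1, d)) a),
              G.map ((𝟙 (op d), g'.2) : ((op d, q.2) : Dᵒᵖ × E) ⟶ (op d, r.2))
                (G.map ((𝟙 (op d), g.2) : ((op d, p.2) : Dᵒᵖ × E) ⟶ (op d, q.2)) b)⟩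
      rw [ha, hb]

/-- The correspondence `(x, y) ↦ Hom_D(K x, y)` attached to a functor `K`. -/
def corr {C D : Type u} [SmallCategory C] [SmallCategory D] (K : C ⥤ D) :
    Cᵒᵖ × D ⥤ Type u :=
  K.op.prod (𝟭 D) ⋙ Functor.hom D

/-- The correspondence `(y, x) ↦ Hom_D(y, K x)` attached to a functor `K`. -/
def cocorr {C D : Type u} [SmallCategory C] [SmallCategory D] (K : C ⥤ D) :
    Dᵒᵖ × C ⥤ Type u :=
  (𝟭 D).op.prod K ⋙ Functor.hom D


section Units

variable (F : Cᵒᵖ × D ⥤ Type u)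

/-- Auxiliary: left unit `Hom_C *_Ω F ≅ F`. -/
def unitLeft : omegaComp (Functor.hom C) F ≅ F where
  hom :=
    { app := fun p => TypeCat.ofHom (Quot.lift
        (fun s => F.map ((s.2.1.op, 𝟙 p.2) : ((op s.1, p.2) : Cᵒᵖ × D) ⟶ (p.1, p.2)) s.2.2)
        (by
          rintro ⟨d, a, x⟩ ⟨d', a', x'⟩ ⟨f, h1, h2⟩
          dsimp at *
          have ha : a' = a ≫ f := by rw [← h1]; simp; rfl
          have harr :
              CategoryStruct.comp (X := ((op d', p.2) : Cᵒᵖ × D))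
                (Y := ((op d, p.2) : Cᵒᵖ × D)) (Z := ((p.1, p.2) : Cᵒᵖ × D))
                (f.op, 𝟙 p.2) (a.op, 𝟙 p.2)
              = ((a'.op, 𝟙 p.2) : ((op d', p.2) : Cᵒᵖ × D) ⟶ (p.1, p.2)) := by
            show ((f.op ≫ a.op, 𝟙 p.2 ≫ 𝟙 p.2) : ((op d', p.2) : Cᵒᵖ × D) ⟶ (p.1, p.2))
              = (a'.op, 𝟙 p.2)
            rw [ha]
            simp
            rfl
          rw [← h2, ← FunctorToTypes.map_comp_apply, harr]))
      naturality := by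
        intro p q g
        ext z
        change Quot _ at z
        induction z using Quot.ind with
        | _ s =>
          rcases s with ⟨d, a, x⟩
          have hb : ((Functor.hom C).map ((g.1, 𝟙 d) :
              ((p.1, d) : Cᵒᵖ × C) ⟶ (q.1, d)) a) = g.1.unop ≫ a := by simp; rfl
          have harr :
              CategoryStruct.comp (X := ((op d, p.2) : Cᵒᵖ × D))
                (Y := ((op d, q.2) : Cᵒᵖ × D)) (Z := ((q.1, q.2) : Cᵒᵖ × D))
                (𝟙 (op d), g.2)
                ((((Functor.hom C).map ((g.1, 𝟙 d) :
                  ((p.1, d) : Cᵒᵖ × C) ⟶ (q.1, d)) a).op, 𝟙 q.2))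
              = CategoryStruct.comp (X := ((op d, p.2) : Cᵒᵖ × D))
                  (Y := ((p.1, p.2) : Cᵒᵖ × D)) (Z := ((q.1, q.2) : Cᵒᵖ × D))
                  (a.op, 𝟙 p.2) (g.1, g.2) := by
            show ((𝟙 (op d) ≫ ((Functor.hom C).map ((g.1, 𝟙 d) :
                ((p.1, d) : Cᵒᵖ × C) ⟶ (q.1, d)) a).op, g.2 ≫ 𝟙 q.2) :
                ((op d, p.2) : Cᵒᵖ × D) ⟶ (q.1, q.2))
              = (a.op ≫ g.1, 𝟙 p.2 ≫ g.2)
            rw [hb]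
            simp
            rfl
          show F.map ((((Functor.hom C).map ((g.1, 𝟙 d) :
              ((p.1, d) : Cᵒᵖ × C) ⟶ (q.1, d)) a).op, 𝟙 q.2) :
                ((op d, q.2) : Cᵒᵖ × D) ⟶ (q.1, q.2))
              (F.map ((𝟙 (op d), g.2) : ((op d, p.2) : Cᵒᵖ × D) ⟶ (op d, q.2)) x)
            = F.map ((g.1, g.2) : ((p.1, p.2) : Cᵒᵖ × D) ⟶ (q.1, q.2))
                (F.map ((a.op, 𝟙 p.2) : ((op d, p.2) : Cᵒᵖ × D) ⟶ (p.1, p.2)) x)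
          rw [← FunctorToTypes.map_comp_apply, ← FunctorToTypes.map_comp_apply, harr] }
  inv :=
    { app := fun p => TypeCat.ofHom fun x => Quot.mk (OmegaRel (Functor.hom C) F p.1 p.2)
        ⟨unop p.1, 𝟙 (unop p.1), x⟩
      naturality := by
        intro p q g
        ext x
        show Quot.mk (OmegaRel (Functor.hom C) F q.1 q.2)
            ⟨unop q.1, 𝟙 (unop q.1),
              F.map ((g.1, g.2) : ((p.1, p.2) : Cᵒᵖ × D) ⟶ (q.1, q.2)) x⟩
          = Quot.mk (OmegaRel (Functor.hom C) F q.1 q.2)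
              ⟨unop p.1,
                (Functor.hom C).map ((g.1, 𝟙 (unop p.1)) :
                  ((p.1, unop p.1) : Cᵒᵖ × C) ⟶ (q.1, unop p.1)) (𝟙 (unop p.1)),
                F.map ((𝟙 (op (unop p.1)), g.2) :
                  ((op (unop p.1), p.2) : Cᵒᵖ × D) ⟶ (op (unop p.1), q.2)) x⟩
        apply Quot.sound
        refine ⟨g.1.unop, ?_, ?_⟩
        · simp
          exact (Category.id_comp _).trans (Category.comp_id _).symm
        · dsimp
          have harr :
              CategoryStruct.comp (X := ((p.1, p.2) : Cᵒᵖ × D))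
                (Y := ((p.1, q.2) : Cᵒᵖ × D)) (Z := ((q.1, q.2) : Cᵒᵖ × D))
                (𝟙 p.1, g.2) (g.1, 𝟙 q.2)
              = ((g.1, g.2) : ((p.1, p.2) : Cᵒᵖ × D) ⟶ (q.1, q.2)) := by
            show ((𝟙 p.1 ≫ g.1, g.2 ≫ 𝟙 q.2) :
                ((p.1, p.2) : Cᵒᵖ × D) ⟶ (q.1, q.2)) = (g.1, g.2)
            simp
          rw [← FunctorToTypes.map_comp_apply, harr] }
  hom_inv_id := by
    ext p z
    change Quot _ at z
    induction z using Quot.ind with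
    | _ s =>
      rcases s with ⟨d, a, x⟩
      show Quot.mk (OmegaRel (Functor.hom C) F p.1 p.2)
          ⟨unop p.1, 𝟙 (unop p.1),
            F.map ((a.op, 𝟙 p.2) : ((op d, p.2) : Cᵒᵖ × D) ⟶ (p.1, p.2)) x⟩
        = Quot.mk (OmegaRel (Functor.hom C) F p.1 p.2) ⟨d, a, x⟩
      apply Quot.sound
      exact ⟨a, by simp; exact Category.id_comp _, rfl⟩
  inv_hom_id := by
    ext p x
    show F.map (((𝟙 (unop p.1)).op, 𝟙 p.2) :
        ((op (unop p.1), p.2) : Cᵒᵖ × D) ⟶ (p.1, p.2)) x = x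
    rw [show (((𝟙 (unop p.1)).op, 𝟙 p.2) :
        ((op (unop p.1), p.2) : Cᵒᵖ × D) ⟶ (p.1, p.2)) = 𝟙 ((p.1, p.2) : Cᵒᵖ × D) by
      show ((𝟙 (unop p.1)).op, 𝟙 p.2) = ((𝟙 p.1, 𝟙 p.2) : ((p.1, p.2) : Cᵒᵖ × D) ⟶ (p.1, p.2))
      simp]
    exact FunctorToTypes.map_id_apply F x

/-- Auxiliary: right unit `F *_Ω Hom_D ≅ F`. -/
def unitRight : omegaComp F (Functor.hom D) ≅ F where
  hom :=
    { app := fun p => TypeCat.ofHom (Quot.lift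
        (fun s => F.map ((𝟙 p.1, s.2.2) : ((p.1, s.1) : Cᵒᵖ × D) ⟶ (p.1, p.2)) s.2.1)
        (by
          rintro ⟨d, x, h⟩ ⟨d', x', h'⟩ ⟨f, h1, h2⟩
          dsimp at *
          have hh : h = f ≫ h' := by rw [← h2]; simp; rfl
          have harr :
              CategoryStruct.comp (X := ((p.1, d) : Cᵒᵖ × D))
                (Y := ((p.1, d') : Cᵒᵖ × D)) (Z := ((p.1, p.2) : Cᵒᵖ × D))
                (𝟙 p.1, f) (𝟙 p.1, h')
              = ((𝟙 p.1, h) : ((p.1, d) : Cᵒᵖ × D) ⟶ (p.1, p.2)) := by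
            show ((𝟙 p.1 ≫ 𝟙 p.1, f ≫ h') : ((p.1, d) : Cᵒᵖ × D) ⟶ (p.1, p.2))
              = (𝟙 p.1, h)
            rw [hh]
            simp
            rfl
          rw [← h1, ← FunctorToTypes.map_comp_apply, harr]))
      naturality := by
        intro p q g
        ext z
        change Quot _ at z
        induction z using Quot.ind with
        | _ s =>
          rcases s with ⟨d, x, h⟩
          have hb : ((Functor.hom D).map ((𝟙 (op d), g.2) :
              ((op d, p.2) : Dᵒᵖ × D) ⟶ (op d, q.2)) h) = h ≫ g.2 := by simp; rfl
          have harr :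
              CategoryStruct.comp (X := ((p.1, d) : Cᵒᵖ × D))
                (Y := ((q.1, d) : Cᵒᵖ × D)) (Z := ((q.1, q.2) : Cᵒᵖ × D))
                (g.1, 𝟙 d)
                ((𝟙 q.1, (Functor.hom D).map ((𝟙 (op d), g.2) :
                  ((op d, p.2) : Dᵒᵖ × D) ⟶ (op d, q.2)) h))
              = CategoryStruct.comp (X := ((p.1, d) : Cᵒᵖ × D))
                  (Y := ((p.1, p.2) : Cᵒᵖ × D)) (Z := ((q.1, q.2) : Cᵒᵖ × D))
                  (𝟙 p.1, h) (g.1, g.2) := by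
            show ((g.1 ≫ 𝟙 q.1, 𝟙 d ≫ (Functor.hom D).map ((𝟙 (op d), g.2) :
                ((op d, p.2) : Dᵒᵖ × D) ⟶ (op d, q.2)) h) :
                ((p.1, d) : Cᵒᵖ × D) ⟶ (q.1, q.2))
              = (𝟙 p.1 ≫ g.1, h ≫ g.2)
            rw [hb]
            simp
          show F.map ((𝟙 q.1, (Functor.hom D).map ((𝟙 (op d), g.2) :
              ((op d, p.2) : Dᵒᵖ × D) ⟶ (op d, q.2)) h) :
                ((q.1, d) : Cᵒᵖ × D) ⟶ (q.1, q.2))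
              (F.map ((g.1, 𝟙 d) : ((p.1, d) : Cᵒᵖ × D) ⟶ (q.1, d)) x)
            = F.map ((g.1, g.2) : ((p.1, p.2) : Cᵒᵖ × D) ⟶ (q.1, q.2))
                (F.map ((𝟙 p.1, h) : ((p.1, d) : Cᵒᵖ × D) ⟶ (p.1, p.2)) x)
          rw [← FunctorToTypes.map_comp_apply, ← FunctorToTypes.map_comp_apply, harr] }
  inv :=
    { app := fun p => TypeCat.ofHom fun x => Quot.mk (OmegaRel F (Functor.hom D) p.1 p.2)
        ⟨p.2, x, 𝟙 p.2⟩
      naturality := by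
        intro p q g
        ext x
        show Quot.mk (OmegaRel F (Functor.hom D) q.1 q.2)
            ⟨q.2, F.map ((g.1, g.2) : ((p.1, p.2) : Cᵒᵖ × D) ⟶ (q.1, q.2)) x, 𝟙 q.2⟩
          = Quot.mk (OmegaRel F (Functor.hom D) q.1 q.2)
              ⟨p.2, F.map ((g.1, 𝟙 p.2) : ((p.1, p.2) : Cᵒᵖ × D) ⟶ (q.1, p.2)) x,
                (Functor.hom D).map ((𝟙 (op p.2), g.2) :
                  ((op p.2, p.2) : Dᵒᵖ × D) ⟶ (op p.2, q.2)) (𝟙 p.2)⟩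
        symm
        apply Quot.sound
        refine ⟨g.2, ?_, ?_⟩
        · dsimp
          have harr :
              CategoryStruct.comp (X := ((p.1, p.2) : Cᵒᵖ × D))
                (Y := ((q.1, p.2) : Cᵒᵖ × D)) (Z := ((q.1, q.2) : Cᵒᵖ × D))
                (g.1, 𝟙 p.2) (𝟙 q.1, g.2)
              = ((g.1, g.2) : ((p.1, p.2) : Cᵒᵖ × D) ⟶ (q.1, q.2)) := by
            show ((g.1 ≫ 𝟙 q.1, 𝟙 p.2 ≫ g.2) :
                ((p.1, p.2) : Cᵒᵖ × D) ⟶ (q.1, q.2)) = (g.1, g.2)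
            simp
          rw [← FunctorToTypes.map_comp_apply, harr]
        · simp
          exact (Category.comp_id _).trans (Category.id_comp _).symm }
  hom_inv_id := by
    ext p z
    change Quot _ at z
    induction z using Quot.ind with
    | _ s =>
      rcases s with ⟨d, x, h⟩
      show Quot.mk (OmegaRel F (Functor.hom D) p.1 p.2)
          ⟨p.2, F.map ((𝟙 p.1, h) : ((p.1, d) : Cᵒᵖ × D) ⟶ (p.1, p.2)) x, 𝟙 p.2⟩
        = Quot.mk (OmegaRel F (Functor.hom D) p.1 p.2) ⟨d, x, h⟩
      symm
      apply Quot.sound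
      exact ⟨h, rfl, by simp; exact Category.comp_id _⟩
  inv_hom_id := by
    ext p x
    show F.map ((𝟙 p.1, 𝟙 p.2) : ((p.1, p.2) : Cᵒᵖ × D) ⟶ (p.1, p.2)) x = x
    exact FunctorToTypes.map_id_apply F x

end Units

/-!
STATEMENT 6: for a functor `K : C ⥤ D`, the assignment
`c ↦ κ_{tw,K}(c) = [(Hom_D ∘ (K^op × Id), id_{K c})] : (C,c) → (D, K c)` is a
natural transformation `κ_C → κ_D ∘ K`, and dually
`c ↦ κ_{cotw,K}(c) = [(Hom_D ∘ (Id^op × K), id_{K c})] : (D, K c) → (C, c)` is a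
natural transformation `κ_D ∘ K → κ_C`.  Naturality at `g : c ⟶ c'` is the
equality of the two composite arrows of Ω, i.e. a natural isomorphism of the
composite correspondences matching the distinguished elements.
-/
theorem stmt6 {C D : Type u} [SmallCategory C] [SmallCategory D]
    (K : C ⥤ D) {c c' : C} (g : c ⟶ c') :
    -- naturality of the κ-twist: κ_D(K g) ∘ κ_{tw}(c) = κ_{tw}(c') ∘ κ_C(g)
    (∃ Φ : omegaComp (Functor.hom C) (corr K) ≅ omegaComp (corr K) (Functor.hom D),
      Φ.hom.app (op c, K.obj c')
          (Quot.mk (OmegaRel (Functor.hom C) (corr K) (op c) (K.obj c'))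
            ⟨c', g, 𝟙 (K.obj c')⟩)
        = Quot.mk (OmegaRel (corr K) (Functor.hom D) (op c) (K.obj c'))
            ⟨K.obj c, 𝟙 (K.obj c), K.map g⟩) ∧
    -- naturality of the κ-cotwist: κ_C(g) ∘ κ_{cotw}(c) = κ_{cotw}(c') ∘ κ_D(K g)
    (∃ Ψ : omegaComp (Functor.hom D) (cocorr K) ≅ omegaComp (cocorr K) (Functor.hom C),
      Ψ.hom.app (op (K.obj c), c')
          (Quot.mk (OmegaRel (Functor.hom D) (cocorr K) (op (K.obj c)) c')
            ⟨K.obj c', K.map g, 𝟙 (K.obj c')⟩)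
        = Quot.mk (OmegaRel (cocorr K) (Functor.hom C) (op (K.obj c)) c')
            ⟨c, 𝟙 (K.obj c), g⟩) := by
  constructor
  · refine ⟨unitLeft (corr K) ≪≫ (unitRight (corr K)).symm, ?_⟩
    show Quot.mk (OmegaRel (corr K) (Functor.hom D) (op c) (K.obj c'))
        ⟨K.obj c',
          (corr K).map ((g.op, 𝟙 (K.obj c')) :
            ((op c', K.obj c') : Cᵒᵖ × D) ⟶ (op c, K.obj c')) (𝟙 (K.obj c')),
          𝟙 (K.obj c')⟩
      = Quot.mk (OmegaRel (corr K) (Functor.hom D) (op c) (K.obj c'))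
          ⟨K.obj c, 𝟙 (K.obj c), K.map g⟩
    have hφ : (corr K).map ((g.op, 𝟙 (K.obj c')) :
        ((op c', K.obj c') : Cᵒᵖ × D) ⟶ (op c, K.obj c')) (𝟙 (K.obj c')) = K.map g := by
      simp [corr]
      exact Category.comp_id _
    rw [hφ]
    symm
    apply Quot.sound
    exact ⟨K.map g, by simp [corr]; exact Category.id_comp _, by simp; exact Category.comp_id _⟩
  · refine ⟨unitLeft (cocorr K) ≪≫ (unitRight (cocorr K)).symm, ?_⟩
    show Quot.mk (OmegaRel (cocorr K) (Functor.hom C) (op (K.obj c)) c')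
        ⟨c',
          (cocorr K).map (((K.map g).op, 𝟙 c') :
            ((op (K.obj c'), c') : Dᵒᵖ × C) ⟶ (op (K.obj c), c')) (𝟙 (K.obj c')),
          𝟙 c'⟩
      = Quot.mk (OmegaRel (cocorr K) (Functor.hom C) (op (K.obj c)) c')
          ⟨c, 𝟙 (K.obj c), g⟩
    have hφ : (cocorr K).map (((K.map g).op, 𝟙 c') :
        ((op (K.obj c'), c') : Dᵒᵖ × C) ⟶ (op (K.obj c), c')) (𝟙 (K.obj c')) = K.map g := by
      simp [cocorr]
      exact Category.comp_id _
    rw [hφ]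
    symm
    apply Quot.sound
    exact ⟨g, by simp [cocorr]; exact Category.id_comp _, by simp; exact Category.comp_id _⟩
end

section
/- For any small category C, the canonical functor κ_{Path(C)} : Path(C) → Ω is faithful; equivalently, the only natural automorphism of the identity functor of the path category Path(C) is the identity. -/
/-!
STATEMENT 9: For any small category `C`, the canonical functor
`κ_{Path(C)} : Path(C) → Ω` is faithful; equivalently, the only natural
automorphism of the identity functor of the path category `Path(C)` is the
identity.  Faithfulness of `κ` is, as in the general criterion, the statement
that two parallel arrows of `Path(C)` identified by some natural automorphism of
the hom functor (preserving the distinguished element) are equal.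
-/

open CategoryTheory Opposite

/-- In a path category, any left-invertible endomorphism is the identity. -/
lemma paths_endo_eq_id {C : Type u} [Category.{v} C] {y : Paths C}
    (u v : y ⟶ y) (h : u ≫ v = 𝟙 y) : u = 𝟙 y := by
  have hl : (Quiver.Path.length u) = 0 := by
    have h' : Quiver.Path.comp u v = 𝟙 y := h
    have := congrArg Quiver.Path.length h'
    have h0 : Quiver.Path.length (𝟙 y) = 0 := rfl
    erw [Quiver.Path.length_comp] at this
    simp only [h0] at this
    omega
  exact Quiver.Path.eq_nil_of_length_zero u hl

theorem stmt9 {C : Type u} [Category.{v} C] :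
    (∀ (x y : Paths C) (f g : x ⟶ y),
        (∃ Φ : Functor.hom (Paths C) ≅ Functor.hom (Paths C),
          Φ.hom.app (op x, y) f = g) → f = g) ∧
      (∀ α : 𝟭 (Paths C) ≅ 𝟭 (Paths C), α = Iso.refl (𝟭 (Paths C))) := by
  constructor
  · rintro x y f g ⟨Φ, hΦ⟩
    set u : y ⟶ y := Φ.hom.app (op y, y) (𝟙 y) with hu
    set v : y ⟶ y := Φ.inv.app (op y, y) (𝟙 y) with hv
    -- naturality along (f.op, 𝟙 y) : (op y, y) ⟶ (op x, y)
    have hnat : Φ.hom.app (op x, y) (f ≫ 𝟙 y) = f ≫ u ≫ 𝟙 y := by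
      have := NatTrans.naturality_apply Φ.hom
        (show (op y, y) ⟶ (op x, y) from (f.op, 𝟙 y)) (𝟙 y)
      exact this
    have hg : g = f ≫ u := by
      rw [← hΦ]; simp at hnat; exact hnat
    -- similarly for the inverse
    have hnat' : Φ.inv.app (op y, y) (u ≫ 𝟙 y) = u ≫ v ≫ 𝟙 y := by
      have := NatTrans.naturality_apply Φ.inv
        (show (op y, y) ⟶ (op y, y) from (u.op, 𝟙 y)) (𝟙 y)
      exact this
    have hinv : Φ.inv.app (op y, y) u = 𝟙 y := by
      have := ConcreteCategory.congr_hom (congrFun (congrArg NatTrans.app Φ.hom_inv_id) (op y, y)) (𝟙 y)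
      exact this
    have huv : u ≫ v = 𝟙 y := by
      rw [← hinv]; simp at hnat'; exact hnat'.symm
    have : u = 𝟙 y := paths_endo_eq_id u v huv
    rw [hg, this, Category.comp_id]
  · intro α
    ext x
    exact paths_endo_eq_id _ (α.inv.app x)
      (by simpa using congrFun (congrArg NatTrans.app α.hom_inv_id) x)
end

section
/- Let Skel : Cat → SCat be the quotient functor to the category with the same objects as Cat and with morphisms the isomorphism classes of functors (two functors being identified iff they are naturally isomorphic). Given two functors φ, ψ with common codomain E, the (Skel)-limit of the cospan is the subcategory L of dom(φ) × dom(ψ) whose arrows are the pairs (f, g) such that there exist isomorphisms u, v in E with u ∘ φ(f) = ψ(g) ∘ v. Then: any category M with functors p : M → dom(φ), q : M → dom(ψ) such that φ ∘ p is naturally isomorphic to ψ ∘ q admits a functor M → L commuting with the projections to dom(φ) and dom(ψ). -/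
open CategoryTheory

theorem stmt13 {A : Type u₁} {B : Type u₂} {E : Type u₃} {M : Type u₄}
    [Category.{v₁} A] [Category.{v₂} B] [Category.{v₃} E] [Category.{v₄} M]
    (φ : A ⥤ E) (ψ : B ⥤ E) (p : M ⥤ A) (q : M ⥤ B) (h : p ⋙ φ ≅ q ⋙ ψ) :
    ∃ r : M ⥤ A × B,
      r ⋙ CategoryTheory.Prod.fst A B = p ∧
      r ⋙ CategoryTheory.Prod.snd A B = q ∧
      ∀ {m m' : M} (t : m ⟶ m'),
        ∃ (u : φ.obj (r.obj m').1 ≅ ψ.obj (r.obj m').2)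
          (v : φ.obj (r.obj m).1 ≅ ψ.obj (r.obj m).2),
          φ.map (r.map t).1 ≫ u.hom = v.hom ≫ ψ.map (r.map t).2 := by
  refine ⟨p.prod' q, rfl, rfl, ?_⟩
  intro m m' t
  exact ⟨h.app m', h.app m, h.hom.naturality t⟩
end
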